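/- For any unit vector f ∈ L²(ℝ) (a wave function), the product of the variances of position and momentum satisfies ⟨ΔP²⟩⟨ΔQ²⟩ ≥ 1/4, where ΔQ² = ⟨f|Q²|f⟩ − ⟨f|Q|f⟩² and ΔP² = ⟨f|P²|f⟩ − ⟨f|P|f⟩², with Q multiplication by x and P = -i d/dx. -/

import Mathlib

open MeasureTheory Real Set

private lemma aux_normsq (z : ℂ) : ((starRingEnd ℂ) z * z).re = ‖z‖ ^ 2 := by
  simp [Complex.sq_norm, Complex.normSq_apply, Complex.mul_re]

private lemma aux_hsq (u v : ℂ) (b : ℝ) :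
    ‖u - (b:ℂ)*Complex.I*v‖^2 = ‖u‖^2 + b^2*‖v‖^2 - 2*b*((starRingEnd ℂ) v * u).im := by
  simp only [Complex.sq_norm, Complex.normSq_apply, Complex.sub_re,
    Complex.sub_im, Complex.mul_re, Complex.mul_im, Complex.I_re, Complex.I_im,
    Complex.ofReal_re, Complex.ofReal_im, Complex.conj_re, Complex.conj_im]
  ring

private lemma aux_gsq (v : ℂ) (c : ℝ) : ‖(c:ℂ) * v‖^2 = c^2 * ‖v‖^2 := by
  rw [norm_mul, mul_pow, Complex.norm_real, Real.norm_eq_abs, sq_abs]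

private lemma aux_cross (u v : ℂ) (a b : ℝ) :
    ((starRingEnd ℂ) ((a:ℂ)*v) * (u - (b:ℂ)*Complex.I*v)).re = a * ((starRingEnd ℂ) v * u).re := by
  simp only [map_mul, Complex.sub_re, Complex.sub_im, Complex.mul_re, Complex.mul_im,
    Complex.I_re, Complex.I_im, Complex.ofReal_re, Complex.ofReal_im, Complex.conj_re,
    Complex.conj_im, Complex.conj_ofReal]
  ring

private lemma aux_cross0 (u v : ℂ) (a : ℝ) :
    ((starRingEnd ℂ) ((a:ℂ)*v) * u).re = a * ((starRingEnd ℂ) v * u).re := by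
  simp only [map_mul, Complex.mul_re, Complex.mul_im, Complex.conj_re, Complex.conj_im,
    Complex.conj_ofReal, Complex.ofReal_re, Complex.ofReal_im]
  ring

private lemma aux_L2mul {g h : ℝ → ℝ} (hg : MemLp g 2 (volume : Measure ℝ)) (hh : MemLp h 2) :
    Integrable (fun x => g x * h x) := by
  have h1 : (1:ENNReal)/1 = 1/2 + 1/2 := by
    rw [ENNReal.div_add_div_same]
    simp
    rw [ENNReal.eq_div_iff (by norm_num) (by norm_num)]
    norm_num
  have := hh.smul hg (r := 1)
  have h2 : Integrable (g • h) := memLp_one_iff_integrable.1 this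
  exact h2

private lemma aux_holder {g h : ℝ → ℂ} (hg : MemLp g 2 (volume : Measure ℝ)) (hh : MemLp h 2) :
    ∫ x, ‖g x‖ * ‖h x‖ ≤ (∫ x, ‖g x‖^2) ^ ((1:ℝ)/2) * (∫ x, ‖h x‖^2) ^ ((1:ℝ)/2) := by
  have h2 : ENNReal.ofReal (2:ℝ) = 2 := by norm_num
  have := integral_mul_norm_le_Lp_mul_Lq (μ := volume) (f := g) (g := h) (p := 2) (q := 2)
    Real.HolderConjugate.two_two (h2 ▸ hg) (h2 ▸ hh)
  simpa [Real.rpow_two] using this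

private lemma aux_deriv_normsq {f f' : ℝ → ℂ} (x : ℝ) (h : HasDerivAt f (f' x) x) :
    HasDerivAt (fun y => ((starRingEnd ℂ) (f y) * f y).re)
      (2 * ((starRingEnd ℂ) (f x) * f' x).re) x := by
  have h1 : HasDerivAt (fun y => (starRingEnd ℂ) (f y)) ((starRingEnd ℂ) (f' x)) x := h.star
  have h2 := h1.mul h
  have h3 : HasDerivAt (fun y => ((starRingEnd ℂ) (f y) * f y).re) (Complex.reCLM ((starRingEnd ℂ) (f' x) * f x + (starRingEnd ℂ) (f x) * f' x)) x := (Complex.reCLM.hasFDerivAt (x := (starRingEnd ℂ) (f x) * f x)).comp_hasDerivAt x h2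
  convert h3 using 1
  simp [Complex.add_re, Complex.mul_re, Complex.conj_re, Complex.conj_im]
  ring

theorem stmt_12 (f f' : ℝ → ℂ)
    (hderiv : ∀ x : ℝ, HasDerivAt f (f' x) x)
    (hf2 : Integrable (fun x : ℝ => ‖f x‖ ^ 2))
    (hnorm : (∫ x : ℝ, ‖f x‖ ^ 2) = 1)
    (hq2 : Integrable (fun x : ℝ => x ^ 2 * ‖f x‖ ^ 2))
    (hq1 : Integrable (fun x : ℝ => x * ‖f x‖ ^ 2))
    (hp2 : Integrable (fun x : ℝ => ‖f' x‖ ^ 2))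
    (hp1 : Integrable (fun x : ℝ => (starRingEnd ℂ) (f x) * f' x)) :
    ((∫ x : ℝ, ‖f' x‖ ^ 2)
        - ((∫ x : ℝ, (starRingEnd ℂ) (f x) * (-Complex.I * f' x)).re) ^ 2) *
      ((∫ x : ℝ, x ^ 2 * ‖f x‖ ^ 2) - (∫ x : ℝ, x * ‖f x‖ ^ 2) ^ 2) ≥ 1 / 4 := by
  -- measurability facts
  have hfc : Continuous f := continuous_iff_continuousAt.2 fun x => (hderiv x).continuousAt
  have hf'sm : StronglyMeasurable f' := by
    have hfd : f' = deriv f := funext fun x => ((hderiv x).deriv).symm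
    rw [hfd]; exact stronglyMeasurable_deriv f
  have hmf : AEStronglyMeasurable f (volume : Measure ℝ) := hfc.aestronglyMeasurable
  have hmf' : AEStronglyMeasurable f' (volume : Measure ℝ) := hf'sm.aestronglyMeasurable
  have hfL2 : MemLp f 2 (volume : Measure ℝ) := (memLp_two_iff_integrable_sq_norm hmf).2 hf2
  have hf'L2 : MemLp f' 2 (volume : Measure ℝ) := (memLp_two_iff_integrable_sq_norm hmf').2 hp2
  set A := ∫ x : ℝ, x * ‖f x‖ ^ 2 with hA
  set B := ∫ x : ℝ, ((starRingEnd ℂ) (f x) * f' x).im with hB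
  -- the momentum mean in the goal equals B
  have hBre : (∫ x : ℝ, (starRingEnd ℂ) (f x) * (-Complex.I * f' x)).re = B := by
    have h1 : (fun x : ℝ => (starRingEnd ℂ) (f x) * (-Complex.I * f' x))
        = fun x : ℝ => -Complex.I * ((starRingEnd ℂ) (f x) * f' x) := by
      funext x; ring
    rw [h1, integral_const_mul]
    have h2 := integral_im (𝕜 := ℂ) hp1
    simp only [Complex.neg_re, Complex.mul_re, Complex.I_re, Complex.I_im, Complex.neg_im]
    simp only [RCLike.im_to_complex] at h2
    rw [hB, ← h2]
    ring
  -- membership of x*f in L²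
  have hxfL2 : MemLp (fun x : ℝ => (x:ℂ) * f x) 2 (volume : Measure ℝ) := by
    refine (memLp_two_iff_integrable_sq_norm ?_).2 ?_
    · exact (Complex.continuous_ofReal.mul hfc).aestronglyMeasurable
    · exact hq2.congr (ae_of_all _ fun x => (aux_gsq (f x) x).symm)
  have hgL2 : MemLp (fun x : ℝ => ((x - A : ℝ):ℂ) * f x) 2 (volume : Measure ℝ) := by
    rw [show (fun x : ℝ => ((x - A : ℝ):ℂ) * f x)
        = fun x : ℝ => (x:ℂ) * f x - (A:ℂ) * f x from funext fun x => by push_cast; ring]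
    exact hxfL2.sub (hfL2.const_mul _)
  have hhL2 : MemLp (fun x : ℝ => f' x - (B:ℂ)*Complex.I*f x) 2 (volume : Measure ℝ) :=
    hf'L2.sub (hfL2.const_mul _)
  -- value of ∫ ‖g‖²
  have hIg : ∫ x : ℝ, ‖((x - A : ℝ):ℂ) * f x‖^2 = (∫ x : ℝ, x^2*‖f x‖^2) - A^2 := by
    have h1 : (fun x : ℝ => ‖((x - A : ℝ):ℂ) * f x‖^2)
        = fun x : ℝ => x^2*‖f x‖^2 - (2*A)*(x*‖f x‖^2) + A^2*‖f x‖^2 := funext fun x => by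
      rw [aux_gsq]; ring
    have i1 : Integrable (fun x : ℝ => x^2*‖f x‖^2 - (2*A)*(x*‖f x‖^2)) :=
      hq2.sub (hq1.const_mul (2*A))
    have i2 : Integrable (fun x : ℝ => (A^2)*‖f x‖^2) := hf2.const_mul (A^2)
    have i3 : Integrable (fun x : ℝ => (2*A)*(x*‖f x‖^2)) := hq1.const_mul (2*A)
    rw [h1, integral_add i1 i2, integral_sub hq2 i3, integral_const_mul, integral_const_mul,
      hnorm, ← hA]
    ring
  -- value of ∫ ‖h‖²
  have hp1im : Integrable (fun x : ℝ => ((starRingEnd ℂ) (f x) * f' x).im) := by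
    simpa [RCLike.im_to_complex] using hp1.im
  have hIh : ∫ x : ℝ, ‖f' x - (B:ℂ)*Complex.I*f x‖^2 = (∫ x : ℝ, ‖f' x‖^2) - B^2 := by
    have h1 : (fun x : ℝ => ‖f' x - (B:ℂ)*Complex.I*f x‖^2)
        = fun x : ℝ => ‖f' x‖^2 + B^2*‖f x‖^2 - 2*B*((starRingEnd ℂ) (f x) * f' x).im :=
      funext fun x => aux_hsq _ _ _
    have i1 : Integrable (fun x : ℝ => ‖f' x‖^2 + (B^2)*‖f x‖^2) :=
      hp2.add (hf2.const_mul (B^2))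
    have i2 : Integrable (fun x : ℝ => (2*B)*((starRingEnd ℂ) (f x) * f' x).im) :=
      hp1im.const_mul (2*B)
    have i3 : Integrable (fun x : ℝ => (B^2)*‖f x‖^2) := hf2.const_mul (B^2)
    rw [h1, integral_sub i1 i2, integral_add hp2 i3, integral_const_mul, integral_const_mul,
      hnorm, ← hB]
    ring
  -- the cross term is integrable
  have hre_meas : AEStronglyMeasurable
      (fun x : ℝ => ((starRingEnd ℂ) (f x) * f' x).re) (volume : Measure ℝ) := by
    apply Complex.continuous_re.comp_aestronglyMeasurable
    exact ((Complex.continuous_conj.comp hfc).aestronglyMeasurable.mul hmf')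
  have hr_int : Integrable (fun x : ℝ => (x - A) * ((starRingEnd ℂ) (f x) * f' x).re) := by
    refine Integrable.mono' (aux_L2mul hgL2.norm hf'L2.norm)
      (((continuous_id.sub continuous_const).aestronglyMeasurable).mul hre_meas)
      (ae_of_all _ fun x => ?_)
    have h1 : (x - A) * ((starRingEnd ℂ) (f x) * f' x).re
        = ((starRingEnd ℂ) (((x - A : ℝ):ℂ) * f x) * f' x).re :=
      (aux_cross0 (f' x) (f x) (x - A)).symm
    rw [Real.norm_eq_abs, h1]
    refine (Complex.abs_re_le_norm _).trans ?_
    rw [norm_mul, Complex.norm_conj]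
  -- FTC: integral of the derivative of (x-A)*|f|² is zero
  have hf2' : Integrable (fun x : ℝ => ((starRingEnd ℂ) (f x) * f x).re) :=
    hf2.congr (ae_of_all _ fun x => (aux_normsq (f x)).symm)
  have h2b : Integrable (fun x : ℝ => (x - A) * (2 * ((starRingEnd ℂ) (f x) * f' x).re)) :=
    (hr_int.const_mul 2).congr (ae_of_all _ fun x => by ring)
  have hFint : Integrable (fun x : ℝ => (x - A) * ((starRingEnd ℂ) (f x) * f x).re) := by
    rw [show (fun x : ℝ => (x - A) * ((starRingEnd ℂ) (f x) * f x).re)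
        = fun x : ℝ => x * ‖f x‖^2 - A * ‖f x‖^2 from funext fun x => by rw [aux_normsq]; ring]
    exact hq1.sub (hf2.const_mul A)
  have hFderiv : ∀ x : ℝ, HasDerivAt (fun y : ℝ => (y - A) * ((starRingEnd ℂ) (f y) * f y).re)
      (((starRingEnd ℂ) (f x) * f x).re + (x - A) * (2 * ((starRingEnd ℂ) (f x) * f' x).re)) x := by
    intro x
    have h1 : HasDerivAt (fun y : ℝ => (y - A) * ((starRingEnd ℂ) (f y) * f y).re) (1 * ((starRingEnd ℂ) (f x) * f x).re + (x - A) * (2 * ((starRingEnd ℂ) (f x) * f' x).re)) x := ((hasDerivAt_id x).sub_const A).mul (aux_deriv_normsq x (hderiv x))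
    convert h1 using 1
    simp
  have hzero := integral_eq_zero_of_hasDerivAt_of_integrable hFderiv (hf2'.add h2b) hFint
  have hcross : ∫ x : ℝ, (x - A) * ((starRingEnd ℂ) (f x) * f' x).re = -(1/2) := by
    rw [integral_add hf2' h2b] at hzero
    have e1 : ∫ x : ℝ, ((starRingEnd ℂ) (f x) * f x).re = 1 := by
      rw [← hnorm]
      exact integral_congr_ae (ae_of_all _ fun x => aux_normsq (f x))
    have e2 : ∫ x : ℝ, (x - A) * (2 * ((starRingEnd ℂ) (f x) * f' x).re)
        = 2 * ∫ x : ℝ, (x - A) * ((starRingEnd ℂ) (f x) * f' x).re := by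
      rw [← integral_const_mul]
      exact integral_congr_ae (ae_of_all _ fun x => by ring)
    rw [e1, e2] at hzero
    linarith
  -- Cauchy–Schwarz
  have hghint : Integrable
      (fun x : ℝ => ‖((x - A : ℝ):ℂ) * f x‖ * ‖f' x - (B:ℂ)*Complex.I*f x‖) :=
    aux_L2mul hgL2.norm hhL2.norm
  have habs : ∀ x : ℝ, |(x - A) * ((starRingEnd ℂ) (f x) * f' x).re|
      ≤ ‖((x - A : ℝ):ℂ) * f x‖ * ‖f' x - (B:ℂ)*Complex.I*f x‖ := by
    intro x
    rw [show (x - A) * ((starRingEnd ℂ) (f x) * f' x).re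
      = ((starRingEnd ℂ) (((x - A : ℝ):ℂ) * f x) * (f' x - (B:ℂ)*Complex.I*f x)).re from
      (aux_cross (f' x) (f x) (x - A) B).symm]
    refine (Complex.abs_re_le_norm _).trans ?_
    rw [norm_mul, Complex.norm_conj]
  have habs_int : (1:ℝ)/2 ≤ ∫ x : ℝ, ‖((x - A : ℝ):ℂ) * f x‖ * ‖f' x - (B:ℂ)*Complex.I*f x‖ := by
    have h1 : ‖∫ x : ℝ, (x - A) * ((starRingEnd ℂ) (f x) * f' x).re‖
        ≤ ∫ x : ℝ, ‖(x - A) * ((starRingEnd ℂ) (f x) * f' x).re‖ :=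
      norm_integral_le_integral_norm _
    simp only [Real.norm_eq_abs] at h1
    rw [hcross] at h1
    have h2 := integral_mono hr_int.abs hghint habs
    have h3 : |(-(1/2):ℝ)| = 1/2 := by norm_num
    linarith
  have hCS := aux_holder hgL2 hhL2
  set a := ∫ x : ℝ, ‖((x - A : ℝ):ℂ) * f x‖^2 with ha_def
  set b := ∫ x : ℝ, ‖f' x - (B:ℂ)*Complex.I*f x‖^2 with hb_def
  have ha : 0 ≤ a := integral_nonneg fun x => by positivity
  have hb : 0 ≤ b := integral_nonneg fun x => by positivity
  have h12 : (1/2:ℝ) ≤ a ^ ((1:ℝ)/2) * b ^ ((1:ℝ)/2) := le_trans habs_int hCS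
  have hsa : (a ^ ((1:ℝ)/2))^2 = a := by
    rw [← Real.rpow_natCast (a ^ ((1:ℝ)/2)) 2, ← Real.rpow_mul ha]; norm_num
  have hsb : (b ^ ((1:ℝ)/2))^2 = b := by
    rw [← Real.rpow_natCast (b ^ ((1:ℝ)/2)) 2, ← Real.rpow_mul hb]; norm_num
  have h14 : 1/4 ≤ a * b := by
    nlinarith [Real.rpow_nonneg ha ((1:ℝ)/2), Real.rpow_nonneg hb ((1:ℝ)/2)]
  rw [ge_iff_le, hBre, ← hIh, ← hIg]
  linarith [h14, mul_comm a b]
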